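/- Let π be an s–t path of G, let e_1 be the first edge of π (the edge of π leaving the source s), and let D_π be the set of edges of G whose initial vertex lies on π but which are not themselves edges of π. Define w : E → ℝ by w(e_1) = 1 + 1/|E|, w(e) = −1/|E| for e ∈ D_π, and w(e) = 0 for all other edges. Then len_w(π) = 1 + 1/|E|, and every s–t path τ with τ ≠ π satisfies −1 ≤ len_w(τ) ≤ 1. -/

import Mathlib

open Finset

/-- A walk in the digraph with edge set `E`: a list of edges, each in `E`,
consecutively chained (the head of each edge is the tail of the next). -/
def IsWalk {V : Type*} (E : Finset (V × V)) (p : List (V × V)) : Prop :=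
  (∀ e ∈ p, e ∈ E) ∧ p.Chain' (fun a b => a.2 = b.1)

/-- An s–t path: a nonempty walk starting at `s` and ending at `t`. -/
def IsSTPath {V : Type*} (E : Finset (V × V)) (s t : V) (p : List (V × V)) : Prop :=
  p ≠ [] ∧ IsWalk E p ∧ p.head?.map Prod.fst = some s ∧
    p.getLast?.map Prod.snd = some t

/-- The digraph with edge set `E` is acyclic: no nonempty walk returns to its
starting vertex. -/
def IsDAG {V : Type*} (E : Finset (V × V)) : Prop :=
  ∀ p : List (V × V), p ≠ [] → IsWalk E p →
    p.head?.map Prod.fst ≠ p.getLast?.map Prod.snd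

/-- The length of a path under the weight function `w`: the sum of the weights
of the edges in the path's edge set. -/
noncomputable def pathLen {V : Type*} [DecidableEq V] (w : V × V → ℝ)
    (p : List (V × V)) : ℝ :=
  ∑ e ∈ p.toFinset, w e

section Aux
variable {V : Type*} {E : Finset (V × V)}

lemma isWalk_append_left {p q : List (V × V)} (h : IsWalk E (p ++ q)) : IsWalk E p :=
  ⟨fun e he => h.1 e (List.mem_append_left _ he), h.2.prefix (List.prefix_append _ _)⟩

lemma isWalk_append_right {p q : List (V × V)} (h : IsWalk E (p ++ q)) : IsWalk E q :=
  ⟨fun e he => h.1 e (List.mem_append_right _ he), h.2.suffix (List.suffix_append _ _)⟩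

lemma isWalk_tail {a : V × V} {l : List (V × V)} (h : IsWalk E (a :: l)) : IsWalk E l :=
  isWalk_append_right (p := [a]) h

/-- In a DAG, no later edge of a walk has the same tail as the head edge. -/
lemma tail_ne_head (hDAG : IsDAG E) {a b : V × V} {l : List (V × V)}
    (h : IsWalk E (a :: l)) (hb : b ∈ l) : a.1 ≠ b.1 := by
  obtain ⟨l1, l2, rfl⟩ := List.append_of_mem hb
  have hpre : IsWalk E ((a :: l1) ++ (b :: l2)) := by simpa using h
  have hrel := (List.isChain_append.mp hpre.2).2.2
  have hg : (a :: l1).getLast? = some ((a :: l1).getLast (List.cons_ne_nil _ _)) :=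
    List.getLast?_eq_getLast _
  have hlast : ((a :: l1).getLast (List.cons_ne_nil _ _)).2 = b.1 := by
    exact hrel _ (by rw [hg]; rfl) b rfl
  have := hDAG (a :: l1) (List.cons_ne_nil _ _) (isWalk_append_left hpre)
  simp only [List.head?_cons, Option.map_some, hg] at this
  intro hab
  exact this (by rw [hlast, hab])

/-- In a DAG, no edge of a walk has tail equal to the final vertex. -/
lemma tail_ne_last (hDAG : IsDAG E) {t : V} {b : V × V} {p : List (V × V)}
    (h : IsWalk E p) (hlast : p.getLast?.map Prod.snd = some t) (hb : b ∈ p) :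
    b.1 ≠ t := by
  obtain ⟨l1, l2, rfl⟩ := List.append_of_mem hb
  have hsuf : IsWalk E (b :: l2) := isWalk_append_right h
  have hgl : (l1 ++ b :: l2).getLast? = (b :: l2).getLast? := by
    rw [List.getLast?_append]
    cases hq : (b :: l2).getLast? with
    | none => simp at hq
    | some x => rfl
  have := hDAG (b :: l2) (List.cons_ne_nil _ _) hsuf
  rw [← hgl, hlast] at this
  simpa using this

/-- In a DAG, a walk whose edges lie in another walk with the same endpoints
equals that walk. -/
lemma walk_eq_of_subset (hDAG : IsDAG E) :
    ∀ p q : List (V × V), p ≠ [] → q ≠ [] → IsWalk E p → IsWalk E q →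
      (∀ e ∈ p, e ∈ q) → p.head?.map Prod.fst = q.head?.map Prod.fst →
      p.getLast?.map Prod.snd = q.getLast?.map Prod.snd → p = q := by
  intro p
  induction p with
  | nil => intro q h; exact absurd rfl h
  | cons e p' ih =>
    intro q _ hqne hp hq hsub hhead hlast
    obtain ⟨f, q', rfl⟩ := List.exists_cons_of_ne_nil hqne
    have hef : e = f := by
      have h1 : e.1 = f.1 := by simpa using hhead
      rcases List.mem_cons.mp (hsub e (by simp)) with h | h
      · exact h
      · exact absurd h1.symm (tail_ne_head hDAG hq h)
    subst hef
    cases p' with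
    | nil =>
      cases q' with
      | nil => rfl
      | cons b q'' =>
        exfalso
        have hlq : (e :: b :: q'').getLast? = (b :: q'').getLast? := rfl
        have hbq : IsWalk E (b :: q'') := isWalk_tail hq
        have hhb : b.1 = e.2 := (List.isChain_cons_cons.mp hq.2).1.symm
        have := hDAG (b :: q'') (List.cons_ne_nil _ _) hbq
        rw [← hlq, ← hlast] at this
        simp only [List.head?_cons, Option.map_some, List.getLast?_singleton] at this
        exact this (by rw [hhb])
    | cons a p'' =>
      cases q' with
      | nil =>
        exfalso
        have hap : IsWalk E (a :: p'') := isWalk_tail hp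
        have hha : a.1 = e.2 := (List.isChain_cons_cons.mp hp.2).1.symm
        have hlp : (e :: a :: p'').getLast? = (a :: p'').getLast? := rfl
        have := hDAG (a :: p'') (List.cons_ne_nil _ _) hap
        rw [← hlp, hlast] at this
        simp only [List.head?_cons, Option.map_some, List.getLast?_singleton] at this
        exact this (by rw [hha])
      | cons b q'' =>
        have key : (a :: p'') = (b :: q'') := by
          apply ih _ (List.cons_ne_nil _ _) (List.cons_ne_nil _ _)
            (isWalk_tail hp) (isWalk_tail hq)
          · intro x hx
            rcases List.mem_cons.mp (hsub x (List.mem_cons_of_mem _ hx)) with h | h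
            · exact absurd rfl (h ▸ tail_ne_head hDAG hp hx)
            · exact h
          · have h1 : a.1 = e.2 := (List.isChain_cons_cons.mp hp.2).1.symm
            have h2 : b.1 = e.2 := (List.isChain_cons_cons.mp hq.2).1.symm
            simp [h1, h2]
          · exact hlast
        rw [key]

lemma split_first {α : Type*} (P : α → Prop) :
    ∀ τ : List α, (∃ e ∈ τ, ¬ P e) →
      ∃ l1 e l2, τ = l1 ++ e :: l2 ∧ ¬ P e ∧ ∀ x ∈ l1, P x := by
  intro τ
  induction τ with
  | nil => simp
  | cons a l ih =>
    intro h
    by_cases ha : P a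
    · have : ∃ e ∈ l, ¬ P e := by
        obtain ⟨e, he, hPe⟩ := h
        rcases List.mem_cons.mp he with rfl | he'
        · exact absurd ha hPe
        · exact ⟨e, he', hPe⟩
      obtain ⟨l1, e, l2, rfl, he, hl1⟩ := ih this
      exact ⟨a :: l1, e, l2, rfl, he, by
        intro x hx; rcases List.mem_cons.mp hx with rfl | hx'
        · exact ha
        · exact hl1 x hx'⟩
    · exact ⟨[], a, l, rfl, ha, by simp⟩

end Aux

/-- witness construction in the proof of Theorem 2: give the first
edge e1 of pi the weight 1 + 1/|E|, give every edge whose initial vertex lies on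
pi but which is not an edge of pi the weight -1/|E|, and give every other edge
weight 0.  Then pi has length 1 + 1/|E| and every other s-t path has length in
[-1, 1]. -/
theorem stmt4 {V : Type*} [Fintype V] [DecidableEq V]
    (E : Finset (V × V)) (s t : V) (hDAG : IsDAG E)
    (π : List (V × V)) (hπ : IsSTPath E s t π)
    (e1 : V × V) (he1 : π.head? = some e1)
    (Dπ : Finset (V × V))
    (hDπ : ∀ e, e ∈ Dπ ↔
      e ∈ E ∧ (∃ e' ∈ π, e'.1 = e.1 ∨ e'.2 = e.1) ∧ e ∉ π)
    (w : V × V → ℝ)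
    (hw1 : w e1 = 1 + 1 / (E.card : ℝ))
    (hwD : ∀ e ∈ Dπ, w e = -(1 / (E.card : ℝ)))
    (hw0 : ∀ e, e ≠ e1 → e ∉ Dπ → w e = 0) :
    pathLen w π = 1 + 1 / (E.card : ℝ) ∧
      ∀ τ : List (V × V), IsSTPath E s t τ → τ.toFinset ≠ π.toFinset →
        -1 ≤ pathLen w τ ∧ pathLen w τ ≤ 1 := by
  obtain ⟨hπne, hπwalk, hπhead, hπlast⟩ := hπ
  have he1mem : e1 ∈ π := List.mem_of_mem_head? (by rw [he1]; rfl)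
  have he1E : e1 ∈ E := hπwalk.1 e1 he1mem
  have hm0 : 0 < (E.card : ℝ) := by
    exact_mod_cast Finset.card_pos.mpr ⟨e1, he1E⟩
  have he1s : e1.1 = s := by
    rw [he1] at hπhead; simpa using hπhead
  constructor
  · unfold pathLen
    rw [Finset.sum_eq_single_of_mem e1 (List.mem_toFinset.2 he1mem)]
    · exact hw1
    · intro b hb hbe
      exact hw0 b hbe (fun hD => ((hDπ b).1 hD).2.2 (List.mem_toFinset.1 hb))
  · intro τ hτ hne
    obtain ⟨hτne, hτwalk, hτhead, hτlast⟩ := hτ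
    have hSE : τ.toFinset ⊆ E := fun e he => hτwalk.1 e (List.mem_toFinset.1 he)
    have hcard : (τ.toFinset.card : ℝ) ≤ (E.card : ℝ) :=
      Nat.cast_le.mpr (Finset.card_le_card hSE)
    -- there is an edge of τ lying in Dπ
    have hclaim : ∃ d ∈ τ.toFinset, d ∈ Dπ := by
      by_cases hsub : ∀ e ∈ τ, e ∈ π
      · exact absurd (by rw [walk_eq_of_subset hDAG τ π hτne hπne hτwalk hπwalk hsub
          (hτhead.trans hπhead.symm) (hτlast.trans hπlast.symm)]) hne
      · push_neg at hsub
        obtain ⟨l1, e, l2, hτeq, heπ, hl1⟩ := split_first (· ∈ π) τ hsub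
        refine ⟨e, List.mem_toFinset.2 (by rw [hτeq]; simp), (hDπ e).2
          ⟨hτwalk.1 e (by rw [hτeq]; simp), ?_, heπ⟩⟩
        cases l1 with
        | nil =>
          refine ⟨e1, he1mem, Or.inl ?_⟩
          have : e.1 = s := by
            rw [hτeq] at hτhead; simpa using hτhead
          rw [he1s, this]
        | cons a l1' =>
          have hg : (a :: l1').getLast? = some ((a :: l1').getLast (List.cons_ne_nil _ _)) :=
            List.getLast?_eq_getLast _
          have hchain : ((a :: l1').getLast (List.cons_ne_nil _ _)).2 = e.1 := by
            have := hτwalk.2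
            rw [hτeq] at this
            exact (List.isChain_append.mp this).2.2 _ (by rw [hg]; rfl) e rfl
          exact ⟨_, hl1 _ (List.getLast_mem _), Or.inr hchain⟩
    obtain ⟨d, hdS, hdD⟩ := hclaim
    have hdπ : d ∉ π := ((hDπ d).1 hdD).2.2
    have hdne1 : d ≠ e1 := fun h => hdπ (h ▸ he1mem)
    constructor
    · -- lower bound
      have hge : ∀ e ∈ τ.toFinset, -(1 / (E.card : ℝ)) ≤ w e := by
        intro e _
        by_cases h1 : e = e1
        · rw [h1, hw1]; nlinarith [one_div_pos.mpr hm0]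
        · by_cases h2 : e ∈ Dπ
          · rw [hwD e h2]
          · rw [hw0 e h1 h2]
            simp [le_of_lt (one_div_pos.mpr hm0)]
      have := Finset.sum_le_sum hge
      rw [Finset.sum_const, nsmul_eq_mul] at this
      unfold pathLen
      refine le_trans ?_ this
      rw [mul_neg, neg_le_neg_iff, mul_one_div, div_le_one hm0]
      exact hcard
    · -- upper bound
      unfold pathLen
      by_cases he1S : e1 ∈ τ.toFinset
      · have hdS' : d ∈ τ.toFinset.erase e1 := Finset.mem_erase.2 ⟨hdne1, hdS⟩
        rw [← Finset.add_sum_erase _ w he1S, ← Finset.add_sum_erase _ w hdS']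
        have hrest : ∑ e ∈ (τ.toFinset.erase e1).erase d, w e ≤ 0 := by
          apply Finset.sum_nonpos
          intro e he
          have h1 : e ≠ d := (Finset.mem_erase.1 he).1
          have h2 : e ≠ e1 := (Finset.mem_erase.1 (Finset.mem_erase.1 he).2).1
          by_cases hD : e ∈ Dπ
          · rw [hwD e hD]; simp [le_of_lt (one_div_pos.mpr hm0)]
          · rw [hw0 e h2 hD]
        rw [hw1, hwD d hdD]
        linarith
      · apply le_trans (Finset.sum_nonpos ?_) one_pos.le
        intro e he
        have h1 : e ≠ e1 := fun h => he1S (h ▸ he)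
        by_cases hD : e ∈ Dπ
        · rw [hwD e hD]; simp [le_of_lt (one_div_pos.mpr hm0)]
        · rw [hw0 e h1 hD]
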